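/- Let n be a positive integer and let p₁, …, p_n be prime numbers (not necessarily distinct). Then the ideal I = ⟨p₁⋯p_n⟩ of ℤ generated by their product satisfies ω_ℤ(I) = n; that is, I is n-absorbing but not k-absorbing for any 1 ≤ k < n. -/

import Mathlib

lemma prime_list_dvd_erase {ι : Type*} [DecidableEq ι] :
    ∀ (L : List ℤ), (∀ q ∈ L, Prime q) → ∀ (s : Finset ι) (x : ι → ℤ),
      s.card = L.length + 1 → L.prod ∣ ∏ i ∈ s, x i →
      ∃ j ∈ s, L.prod ∣ ∏ i ∈ s.erase j, x i := by
  intro L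
  induction L with
  | nil =>
    intro _ s x hcard _
    obtain ⟨j, hj⟩ := Finset.card_eq_one.mp hcard
    exact ⟨j, by simp [hj], by simp⟩
  | cons q L ih =>
    intro hprime s x hcard hdvd
    have hq : Prime q := hprime q List.mem_cons_self
    have hqdvd : q ∣ ∏ i ∈ s, x i := (dvd_mul_right q L.prod).trans (by simpa using hdvd)
    obtain ⟨j₀, hj₀s, y, hy⟩ := hq.exists_mem_finset_dvd hqdvd
    have hsplit : ∏ i ∈ s, x i = x j₀ * ∏ i ∈ s.erase j₀, x i :=
      (Finset.mul_prod_erase s x hj₀s).symm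
    have hLdvd : L.prod ∣ y * ∏ i ∈ s.erase j₀, x i := by
      have h1 : q * L.prod ∣ q * (y * ∏ i ∈ s.erase j₀, x i) := by
        rw [← mul_assoc, ← hy, ← hsplit]; simpa using hdvd
      exact (mul_dvd_mul_iff_left hq.ne_zero).mp h1
    have hcard' : (s.erase j₀).card = L.length + 1 := by
      rw [Finset.card_erase_of_mem hj₀s, hcard]; rfl
    have hne : (s.erase j₀).Nonempty := by
      rw [← Finset.card_pos, hcard']; omega
    obtain ⟨j₁, hj₁⟩ := hne
    have hj₁ne : j₁ ≠ j₀ := Finset.ne_of_mem_erase hj₁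
    set x' : ι → ℤ := Function.update x j₁ (y * x j₁) with hx'
    have hupd1 : ∀ T : Finset ι, j₁ ∉ T → ∏ i ∈ T, x' i = ∏ i ∈ T, x i := by
      intro T hT
      refine Finset.prod_congr rfl fun i hi => ?_
      exact Function.update_of_ne (by rintro rfl; exact hT hi) _ _
    have hupd2 : ∀ T : Finset ι, j₁ ∈ T → ∏ i ∈ T, x' i = y * ∏ i ∈ T, x i := by
      intro T hT
      rw [← Finset.mul_prod_erase T x' hT, ← Finset.mul_prod_erase T x hT,
        hupd1 _ (Finset.notMem_erase _ _), hx', Function.update_self, mul_assoc]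
    obtain ⟨j, hj, hjdvd⟩ := ih (fun r hr => hprime r (List.mem_cons_of_mem _ hr))
      (s.erase j₀) x' hcard' (by rw [hupd2 _ hj₁]; exact hLdvd)
    have hjs : j ∈ s := Finset.mem_of_mem_erase hj
    have hjne : j ≠ j₀ := Finset.ne_of_mem_erase hj
    have hqx : q ∣ x j₀ := ⟨y, hy⟩
    by_cases hcase : j = j₁
    · subst hcase
      refine ⟨j, hjs, ?_⟩
      have heq : ∏ i ∈ (s.erase j₀).erase j, x' i = ∏ i ∈ (s.erase j₀).erase j, x i :=
        hupd1 _ (Finset.notMem_erase _ _)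
      rw [heq] at hjdvd
      have hj₀mem : j₀ ∈ s.erase j := Finset.mem_erase.mpr ⟨Ne.symm hjne, hj₀s⟩
      have : (q :: L).prod ∣ x j₀ * ∏ i ∈ (s.erase j₀).erase j, x i := by
        rw [List.prod_cons]
        exact mul_dvd_mul hqx hjdvd
      rwa [← Finset.erase_right_comm, Finset.mul_prod_erase _ x hj₀mem] at this
    · refine ⟨j, hjs, ?_⟩
      have hj₁mem : j₁ ∈ (s.erase j₀).erase j := Finset.mem_erase.mpr ⟨Ne.symm hcase, hj₁⟩
      rw [hupd2 _ hj₁mem] at hjdvd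
      have hj₀mem : j₀ ∈ s.erase j := Finset.mem_erase.mpr ⟨Ne.symm hjne, hj₀s⟩
      have : (q :: L).prod ∣ x j₀ * ∏ i ∈ (s.erase j₀).erase j, x i := by
        rw [List.prod_cons, hy, mul_assoc]
        exact mul_dvd_mul_left q hjdvd
      rwa [← Finset.erase_right_comm, Finset.mul_prod_erase _ x hj₀mem] at this


/-- A proper ideal `I` is `n`-absorbing if whenever a product of `n + 1` elements
lies in `I`, the product of some `n` of them (in increasing index order) lies in `I`. -/
def IsNAbsorbing {R : Type*} [CommRing R] (n : ℕ) (I : Ideal R) : Prop :=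
  ∀ x : Fin (n + 1) → R, (∏ i, x i) ∈ I →
    ∃ ι : Fin n → Fin (n + 1), StrictMono ι ∧ (∏ j, x (ι j)) ∈ I

/-- `omegaR I` is the smallest positive integer `n` such that `I` is `n`-absorbing,
and `∞` if no such `n` exists. -/
noncomputable def omegaR {R : Type*} [CommRing R] (I : Ideal R) : ℕ∞ :=
  sInf {w : ℕ∞ | ∃ n : ℕ, 0 < n ∧ w = (n : ℕ∞) ∧ IsNAbsorbing n I}

/-- The ideal of `ℤ` generated by a product of `n` prime numbers has `ω` equal to `n`:
it is `n`-absorbing but not `k`-absorbing for `1 ≤ k < n`. -/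
theorem omegaR_span_prod_primes_int (n : ℕ) (hn : 0 < n)
    (p : Fin n → ℕ) (hp : ∀ i, Nat.Prime (p i)) :
    omegaR (Ideal.span {(∏ i, (p i : ℤ))}) = (n : ℕ∞) ∧
    IsNAbsorbing n (Ideal.span {(∏ i, (p i : ℤ))}) ∧
    ∀ k : ℕ, 1 ≤ k → k < n → ¬ IsNAbsorbing k (Ideal.span {(∏ i, (p i : ℤ))}) := by
  have hm2 : ∀ i, 2 ≤ (p i : ℤ) := fun i => by exact_mod_cast (hp i).two_le
  have habs : IsNAbsorbing n (Ideal.span {(∏ i, (p i : ℤ))}) := by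
    intro x hx
    rw [Ideal.mem_span_singleton] at hx
    have hL : ∀ q ∈ List.ofFn (fun i => (p i : ℤ)), Prime q := by
      intro q hq
      rw [List.mem_ofFn] at hq
      obtain ⟨i, rfl⟩ := hq
      exact Nat.prime_iff_prime_int.mp (hp i)
    obtain ⟨j, -, hjdvd⟩ := prime_list_dvd_erase _ hL Finset.univ x
      (by simp) (by rwa [List.prod_ofFn])
    refine ⟨j.succAbove, Fin.strictMono_succAbove j, ?_⟩
    rw [Ideal.mem_span_singleton]
    have himg : ∏ k, x (j.succAbove k) = ∏ i ∈ Finset.univ.erase j, x i := by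
      rw [← Finset.compl_singleton, ← Fin.image_succAbove_univ j,
        Finset.prod_image (fun a _ b _ h => (Fin.strictMono_succAbove j).injective h)]
    rw [himg]
    rwa [List.prod_ofFn] at hjdvd
  have hnot : ∀ k : ℕ, 1 ≤ k → k < n →
      ¬ IsNAbsorbing k (Ideal.span {(∏ i, (p i : ℤ))}) := by
    intro k hk1 hkn hab
    have hkn' : k + (n - k) = n := by omega
    set x : Fin (k+1) → ℤ :=
      Fin.snoc (fun i : Fin k => (p (Fin.cast hkn' (Fin.castAdd (n-k) i)) : ℤ))
        (∏ i : Fin (n-k), (p (Fin.cast hkn' (Fin.natAdd k i)) : ℤ)) with hxdef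
    have hprodx : ∏ i, x i = ∏ i, (p i : ℤ) := by
      rw [Fin.prod_univ_castSucc]
      simp only [hxdef, Fin.snoc_castSucc, Fin.snoc_last]
      have h1 := Fin.prod_univ_add (f := fun i : Fin (k+(n-k)) => (p (Fin.cast hkn' i) : ℤ))
      rw [← h1]
      exact Equiv.prod_comp (finCongr hkn') (fun t => (p t : ℤ))
    have hx2 : ∀ i, 2 ≤ x i := by
      intro i
      refine Fin.lastCases ?_ ?_ i
      · simp only [hxdef, Fin.snoc_last]
        have h0 : (⟨0, by omega⟩ : Fin (n-k)) ∈ Finset.univ := Finset.mem_univ _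
        calc (2:ℤ) ≤ (p (Fin.cast hkn' (Fin.natAdd k ⟨0, by omega⟩)) : ℤ) := hm2 _
          _ ≤ _ := by
            apply Int.le_of_dvd
            · exact Finset.prod_pos fun i _ => by linarith [hm2 (Fin.cast hkn' (Fin.natAdd k i))]
            · exact Finset.dvd_prod_of_mem _ h0
      · intro i
        simp only [hxdef, Fin.snoc_castSucc]
        exact hm2 _
    obtain ⟨ι, hι, hmem⟩ := hab x (by
      rw [hprodx]; exact Ideal.mem_span_singleton_self _)
    rw [Ideal.mem_span_singleton] at hmem
    have himgcard : (Finset.univ.image ι).card = k := by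
      rw [Finset.card_image_of_injective _ hι.injective, Finset.card_univ, Fintype.card_fin]
    have hne : (Finset.univ \ Finset.univ.image ι).Nonempty := by
      rw [← Finset.card_pos, Finset.card_sdiff_of_subset (Finset.subset_univ _), himgcard,
        Finset.card_univ, Fintype.card_fin]
      omega
    obtain ⟨j, hj⟩ := hne
    have hjimg : j ∉ Finset.univ.image ι := (Finset.mem_sdiff.mp hj).2
    have hins : insert j (Finset.univ.image ι) = Finset.univ := by
      apply Finset.eq_of_subset_of_card_le (Finset.subset_univ _)
      rw [Finset.card_insert_of_notMem hjimg, himgcard, Finset.card_univ, Fintype.card_fin]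
    have ht : ∏ i ∈ Finset.univ.image ι, x i = ∏ j', x (ι j') :=
      Finset.prod_image (fun a _ b _ h => hι.injective h)
    have hm_eq : ∏ i, (p i : ℤ) = x j * ∏ j', x (ι j') := by
      rw [← hprodx, ← hins, Finset.prod_insert hjimg, ht]
    have htpos : 0 < ∏ j', x (ι j') := Finset.prod_pos fun i _ => by linarith [hx2 (ι i)]
    have hle : ∏ i, (p i : ℤ) ≤ ∏ j', x (ι j') := Int.le_of_dvd htpos hmem
    nlinarith [hx2 j, htpos, hm_eq, hle]
  refine ⟨?_, habs, hnot⟩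
  apply le_antisymm
  · exact sInf_le ⟨n, hn, rfl, habs⟩
  · apply le_sInf
    rintro w ⟨k, hk, rfl, hab⟩
    have hnk : n ≤ k := by
      by_contra hlt
      exact hnot k hk (by omega) hab
    exact_mod_cast hnk
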